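/- arXiv:2505.05249 — 2 statements merged into one kernel-verified Lean document; each statement's English description precedes it below -/
import Mathlib

section
/- (Theorem 2, per-iteration inequality.) Let θ, s : ℕ → E and η, ε : ℕ → ℝ satisfy θ (t+1) = θ t − η t • s t, 0 ≤ η t, 0 ≤ ε t, and ‖s t − g (θ t)‖ ≤ ε t for all t. Then for every t, L (θ (t+1)) ≤ L (θ t) − η t * ‖g (θ t)‖^2 + η t * ε t * ‖g (θ t)‖ + (C * (η t)^2 / 2) * (‖g (θ t)‖ + ε t)^2. -/
open InnerProductSpace

lemma descent_aux
    {E : Type*} [NormedAddCommGroup E] [InnerProductSpace ℝ E] [CompleteSpace E]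
    (L : E → ℝ) (g : E → E) (hg : ∀ x : E, HasGradientAt L (g x) x)
    (C : NNReal) (hLip : LipschitzWith C g) (x v : E) :
    L (x + v) ≤ L x + ⟪g x, v⟫_ℝ + (C : ℝ) / 2 * ‖v‖ ^ 2 := by
  set h : ℝ → ℝ := fun t => L (x + t • v) - t * ⟪g x, v⟫_ℝ - (C : ℝ) / 2 * t ^ 2 * ‖v‖ ^ 2
    with hh
  have hderiv : ∀ t : ℝ, HasDerivAt h
      (⟪g (x + t • v), v⟫_ℝ - ⟪g x, v⟫_ℝ - (C : ℝ) * t * ‖v‖ ^ 2) t := by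
    intro t
    have h1 : HasDerivAt (fun t : ℝ => x + t • v) v t := by
      simpa using ((hasDerivAt_id t).smul_const v).const_add x
    have h2 : HasDerivAt (fun t : ℝ => L (x + t • v)) ⟪g (x + t • v), v⟫_ℝ t := by
      have := (hg (x + t • v)).hasFDerivAt.comp_hasDerivAt t h1
      exact this
    have h3 : HasDerivAt (fun t : ℝ => t * ⟪g x, v⟫_ℝ) ⟪g x, v⟫_ℝ t := by
      simpa using (hasDerivAt_id t).mul_const ⟪g x, v⟫_ℝ
    have h4 : HasDerivAt (fun t : ℝ => (C : ℝ) / 2 * t ^ 2 * ‖v‖ ^ 2)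
        ((C : ℝ) * t * ‖v‖ ^ 2) t := by
      have : HasDerivAt (fun t : ℝ => t ^ 2) (2 * t) t := by
        simpa using hasDerivAt_pow 2 t
      have := ((this.const_mul ((C : ℝ) / 2)).mul_const (‖v‖ ^ 2))
      refine this.congr_deriv ?_
      ring
    exact (h2.sub h3).sub h4
  have hmono : AntitoneOn h (Set.Icc 0 1) := by
    apply antitoneOn_of_deriv_nonpos (convex_Icc 0 1)
    · exact Continuous.continuousOn (by
        have : Continuous h := by
          have : Differentiable ℝ h := fun t => (hderiv t).differentiableAt
          exact this.continuous
        exact this)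
    · intro t ht
      exact (hderiv t).differentiableAt.differentiableWithinAt
    · intro t ht
      rw [interior_Icc] at ht
      rw [(hderiv t).deriv]
      have hb : ⟪g (x + t • v), v⟫_ℝ - ⟪g x, v⟫_ℝ ≤ (C : ℝ) * t * ‖v‖ ^ 2 := by
        have := real_inner_le_norm (g (x + t • v) - g x) v
        have hlip : ‖g (x + t • v) - g x‖ ≤ (C : ℝ) * (t * ‖v‖) := by
          have := hLip.norm_sub_le (x + t • v) x
          simpa [norm_smul, abs_of_pos ht.1, mul_assoc] using this
        calc ⟪g (x + t • v), v⟫_ℝ - ⟪g x, v⟫_ℝ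
            = ⟪g (x + t • v) - g x, v⟫_ℝ := by rw [inner_sub_left]
          _ ≤ ‖g (x + t • v) - g x‖ * ‖v‖ := real_inner_le_norm _ _
          _ ≤ (C : ℝ) * (t * ‖v‖) * ‖v‖ := by
              apply mul_le_mul_of_nonneg_right hlip (norm_nonneg v)
          _ = (C : ℝ) * t * ‖v‖ ^ 2 := by ring
      linarith
  have := hmono (Set.left_mem_Icc.2 zero_le_one) (Set.right_mem_Icc.2 zero_le_one) zero_le_one
  simp only [hh] at this
  simp only [zero_smul, add_zero, one_smul, zero_mul, one_mul, one_pow, mul_one] at this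
  nlinarith [this]

/-- Theorem 2, per-iteration inequality. -/
theorem surrogate_per_iteration
    {E : Type*} [NormedAddCommGroup E] [InnerProductSpace ℝ E] [CompleteSpace E]
    (L : E → ℝ) (g : E → E) (hg : ∀ x : E, HasGradientAt L (g x) x)
    (C : NNReal) (hLip : LipschitzWith C g)
    (θ s : ℕ → E) (η ε : ℕ → ℝ)
    (hθ : ∀ t : ℕ, θ (t + 1) = θ t - η t • s t)
    (hη : ∀ t : ℕ, 0 ≤ η t) (hε : ∀ t : ℕ, 0 ≤ ε t)
    (hs : ∀ t : ℕ, ‖s t - g (θ t)‖ ≤ ε t) :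
    ∀ t : ℕ,
      L (θ (t + 1)) ≤
        L (θ t) - η t * ‖g (θ t)‖ ^ 2 + η t * ε t * ‖g (θ t)‖ +
          ((C : ℝ) * (η t) ^ 2 / 2) * (‖g (θ t)‖ + ε t) ^ 2 := by
  intro t
  have key := descent_aux L g hg C hLip (θ t) (-(η t • s t))
  rw [hθ t, sub_eq_add_neg]
  set x := θ t
  set G := g x with hG
  set e := s t - G with he
  have hse : s t = G + e := by simp [he]
  have h1 : ⟪G, -(η t • s t)⟫_ℝ = -(η t) * (‖G‖ ^ 2 + ⟪G, e⟫_ℝ) := by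
    rw [hse, inner_neg_right, inner_smul_right, inner_add_right, real_inner_self_eq_norm_sq]
    ring
  have h2 : -⟪G, e⟫_ℝ ≤ ε t * ‖G‖ := by
    have := real_inner_le_norm e G
    have h3 : ‖e‖ ≤ ε t := hs t
    calc -⟪G, e⟫_ℝ = ⟪-e, G⟫_ℝ := by rw [inner_neg_left, real_inner_comm]
      _ ≤ ‖-e‖ * ‖G‖ := real_inner_le_norm _ _
      _ = ‖e‖ * ‖G‖ := by rw [norm_neg]
      _ ≤ ε t * ‖G‖ := mul_le_mul_of_nonneg_right h3 (norm_nonneg _)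
  have h4 : ‖-(η t • s t)‖ ^ 2 ≤ (η t) ^ 2 * (‖G‖ + ε t) ^ 2 := by
    have hns : ‖s t‖ ≤ ‖G‖ + ε t := by
      calc ‖s t‖ = ‖G + e‖ := by rw [hse]
        _ ≤ ‖G‖ + ‖e‖ := norm_add_le _ _
        _ ≤ ‖G‖ + ε t := by linarith [hs t]
    have : ‖-(η t • s t)‖ = η t * ‖s t‖ := by
      rw [norm_neg, norm_smul, Real.norm_eq_abs, abs_of_nonneg (hη t)]
    rw [this, mul_pow]
    apply mul_le_mul_of_nonneg_left _ (sq_nonneg _)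
    exact pow_le_pow_left₀ (norm_nonneg _) hns 2
  have h5 : ⟪G, -(η t • s t)⟫_ℝ ≤ -(η t) * ‖G‖ ^ 2 + η t * ε t * ‖G‖ := by
    rw [h1]
    have := mul_le_mul_of_nonneg_left h2 (hη t)
    nlinarith
  have hC : (0 : ℝ) ≤ (C : ℝ) := C.2
  calc L (x + -(η t • s t)) ≤ L x + ⟪G, -(η t • s t)⟫_ℝ + (C : ℝ) / 2 * ‖-(η t • s t)‖ ^ 2 :=
        key
    _ ≤ L x - η t * ‖G‖ ^ 2 + η t * ε t * ‖G‖ + ((C : ℝ) * (η t) ^ 2 / 2) * (‖G‖ + ε t) ^ 2 := by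
        nlinarith [h5, mul_le_mul_of_nonneg_left h4 hC]
end

section
/- (Theorem 2, telescoping bound.) Suppose C > 0 and L is bounded below: B ≤ L x for all x ∈ E. Let θ, s : ℕ → E and η, ε : ℕ → ℝ satisfy, for all t: θ (t+1) = θ t − η t • s t; ‖s t − g (θ t)‖ ≤ ε t; 0 ≤ ε t ≤ ‖g (θ t)‖ / 4; and 0 ≤ η t ≤ 8 / (25 * C). Then for every T : ℕ, ∑_{t ∈ Finset.range T} η t * ‖g (θ t)‖^2 ≤ 2 * (L (θ 0) − B); in particular the series ∑ t, η t * ‖g (θ t)‖^2 is summable. -/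
open intervalIntegral in
lemma descent_lemma
    {E : Type*} [NormedAddCommGroup E] [InnerProductSpace ℝ E] [CompleteSpace E]
    (L : E → ℝ) (g : E → E) (hg : ∀ x : E, HasGradientAt L (g x) x)
    (C : NNReal) (hLip : LipschitzWith C g) (x v : E) :
    L (x + v) ≤ L x + inner ℝ (g x) v + (C : ℝ) / 2 * ‖v‖ ^ 2 := by
  have hc : Continuous fun t : ℝ => x + t • v := by continuity
  have h1 : ∀ t : ℝ, HasDerivAt (fun t : ℝ => L (x + t • v))
      (inner ℝ (g (x + t • v)) v : ℝ) t := by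
    intro t
    have hcurve : HasDerivAt (fun t : ℝ => x + t • v) v t := by
      simpa using ((hasDerivAt_id t).smul_const v).const_add x
    have := ((hg (x + t • v)).hasFDerivAt).comp_hasDerivAt t hcurve
    simp [InnerProductSpace.toDual_apply_apply] at this; exact this
  have hcont : Continuous fun t : ℝ => (inner ℝ (g (x + t • v)) v : ℝ) :=
    (hLip.continuous.comp hc).inner continuous_const
  have key : ∫ t in (0:ℝ)..1, (inner ℝ (g (x + t • v)) v : ℝ) = L (x + v) - L x := by
    have := intervalIntegral.integral_eq_sub_of_hasDerivAt
      (f := fun t : ℝ => L (x + t • v))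
      (f' := fun t : ℝ => (inner ℝ (g (x + t • v)) v : ℝ))
      (a := 0) (b := 1) (fun t _ => h1 t) (hcont.intervalIntegrable 0 1)
    simpa using this
  have hbound : ∫ t in (0:ℝ)..1, (inner ℝ (g (x + t • v)) v : ℝ)
      ≤ ∫ t in (0:ℝ)..1, (inner ℝ (g x) v + (C : ℝ) * ‖v‖ ^ 2 * t) := by
    apply intervalIntegral.integral_mono_on (by norm_num)
      (hcont.intervalIntegrable 0 1)
      (by apply Continuous.intervalIntegrable; continuity)
    intro t ht
    rw [Set.mem_Icc] at ht
    have h2 : (inner ℝ (g (x + t • v)) v : ℝ) - inner ℝ (g x) v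
        = inner ℝ (g (x + t • v) - g x) v := by
      rw [inner_sub_left]
    have h3 : (inner ℝ (g (x + t • v) - g x) v : ℝ) ≤ ‖g (x + t • v) - g x‖ * ‖v‖ :=
      real_inner_le_norm _ _
    have h4 : ‖g (x + t • v) - g x‖ ≤ (C : ℝ) * (t * ‖v‖) := by
      have := hLip.dist_le_mul (x + t • v) x
      rw [dist_eq_norm, dist_eq_norm] at this
      simpa [norm_smul, abs_of_nonneg ht.1] using this
    have hv : (0:ℝ) ≤ ‖v‖ := norm_nonneg _
    nlinarith [mul_le_mul_of_nonneg_right h4 hv]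
  have hrhs : ∫ t in (0:ℝ)..1, (inner ℝ (g x) v + (C : ℝ) * ‖v‖ ^ 2 * t)
      = inner ℝ (g x) v + (C : ℝ) / 2 * ‖v‖ ^ 2 := by
    rw [intervalIntegral.integral_add (intervalIntegrable_const)
      ((intervalIntegral.intervalIntegrable_id).const_mul _)]
    rw [intervalIntegral.integral_const_mul, integral_id, integral_const]
    norm_num
    ring
  linarith [key ▸ (hbound.trans_eq hrhs)]

/-- Theorem 2, telescoping bound. -/
theorem surrogate_telescoping_bound
    {E : Type*} [NormedAddCommGroup E] [InnerProductSpace ℝ E] [CompleteSpace E]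
    (L : E → ℝ) (g : E → E) (hg : ∀ x : E, HasGradientAt L (g x) x)
    (C : NNReal) (hLip : LipschitzWith C g) (hC : 0 < (C : ℝ))
    (B : ℝ) (hB : ∀ x : E, B ≤ L x)
    (θ s : ℕ → E) (η ε : ℕ → ℝ)
    (hθ : ∀ t : ℕ, θ (t + 1) = θ t - η t • s t)
    (hs : ∀ t : ℕ, ‖s t - g (θ t)‖ ≤ ε t)
    (hε0 : ∀ t : ℕ, 0 ≤ ε t) (hε : ∀ t : ℕ, ε t ≤ ‖g (θ t)‖ / 4)
    (hη0 : ∀ t : ℕ, 0 ≤ η t) (hη : ∀ t : ℕ, η t ≤ 8 / (25 * (C : ℝ))) :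
    (∀ T : ℕ, ∑ t ∈ Finset.range T, η t * ‖g (θ t)‖ ^ 2 ≤ 2 * (L (θ 0) - B)) ∧
      Summable (fun t : ℕ => η t * ‖g (θ t)‖ ^ 2) := by
  have step : ∀ t : ℕ, (1/2) * (η t * ‖g (θ t)‖ ^ 2) ≤ L (θ t) - L (θ (t + 1)) := by
    intro t
    have hdesc := descent_lemma L g hg C hLip (θ t) (-(η t • s t))
    have hy : θ t + -(η t • s t) = θ (t + 1) := by rw [hθ t, sub_eq_add_neg]
    rw [hy] at hdesc
    have hinner : (inner ℝ (g (θ t)) (-(η t • s t)) : ℝ)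
        = -(η t * inner ℝ (g (θ t)) (s t)) := by
      rw [inner_neg_right, real_inner_smul_right]
    have hnorm : ‖-(η t • s t)‖ ^ 2 = η t ^ 2 * ‖s t‖ ^ 2 := by
      rw [norm_neg, norm_smul, mul_pow, Real.norm_eq_abs, sq_abs]
    rw [hinner, hnorm] at hdesc
    set G := ‖g (θ t)‖ with hGdef
    have hG0 : 0 ≤ G := norm_nonneg _
    have hS0 : 0 ≤ ‖s t‖ := norm_nonneg _
    -- lower bound on inner product
    have hIl : G ^ 2 - G * ε t ≤ (inner ℝ (g (θ t)) (s t) : ℝ) := by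
      have h1 : (inner ℝ (g (θ t)) (s t) : ℝ)
          = inner ℝ (g (θ t)) (g (θ t)) + inner ℝ (g (θ t)) (s t - g (θ t)) := by
        rw [← inner_add_right, add_sub_cancel]
      rw [real_inner_self_eq_norm_sq] at h1
      have h2 := abs_le.mp (abs_real_inner_le_norm (g (θ t)) (s t - g (θ t)))
      have h3 := hs t
      nlinarith [mul_le_mul_of_nonneg_left h3 hG0]
    -- upper bound on ‖s t‖
    have hS : ‖s t‖ ≤ G + ε t := by
      calc ‖s t‖ = ‖g (θ t) + (s t - g (θ t))‖ := by rw [add_sub_cancel]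
        _ ≤ G + ‖s t - g (θ t)‖ := norm_add_le _ _
        _ ≤ G + ε t := by linarith [hs t]
    have hS2 : ‖s t‖ ^ 2 ≤ (25/16) * G ^ 2 := by nlinarith [hε t, hε0 t]
    have hCη : (C : ℝ) * η t ≤ 8 / 25 := by
      have h6 : η t * (25 * (C : ℝ)) ≤ 8 :=
        (le_div_iff₀ (by linarith : (0:ℝ) < 25 * C)).mp (hη t)
      nlinarith
    have hmain : (C : ℝ) / 2 * (η t ^ 2 * ‖s t‖ ^ 2) ≤ (1/4) * (η t * G ^ 2) := by
      have h7 : η t * ‖s t‖ ^ 2 ≤ η t * ((25/16) * G ^ 2) :=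
        mul_le_mul_of_nonneg_left hS2 (hη0 t)
      nlinarith [mul_le_mul hCη h7 (mul_nonneg (hη0 t) (sq_nonneg _)) (by norm_num),
        mul_nonneg (hη0 t) (mul_nonneg hG0 hG0)]
    have hIη : η t * (G ^ 2 - G * ε t) ≤ η t * inner ℝ (g (θ t)) (s t) :=
      mul_le_mul_of_nonneg_left hIl (hη0 t)
    have hGε : η t * ((3/4) * G ^ 2) ≤ η t * (G ^ 2 - G * ε t) := by
      apply mul_le_mul_of_nonneg_left _ (hη0 t)
      nlinarith [mul_le_mul_of_nonneg_left (hε t) hG0]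
    linarith
  have partial_bound : ∀ T : ℕ,
      ∑ t ∈ Finset.range T, η t * ‖g (θ t)‖ ^ 2 ≤ 2 * (L (θ 0) - B) := by
    intro T
    have h1 : ∑ t ∈ Finset.range T, (1/2) * (η t * ‖g (θ t)‖ ^ 2)
        ≤ ∑ t ∈ Finset.range T, (L (θ t) - L (θ (t + 1))) :=
      Finset.sum_le_sum fun t _ => step t
    rw [Finset.sum_range_sub' (fun t => L (θ t)) T] at h1
    rw [← Finset.mul_sum] at h1
    have h2 := hB (θ T)
    linarith
  refine ⟨partial_bound, ?_⟩
  exact summable_of_sum_range_le (fun t => mul_nonneg (hη0 t) (sq_nonneg _)) partial_bound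
end
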